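/- For every complex number s with 0 < |s| < 1 and every nonzero complex number t, one has the Jacobi triple product identity ∏_{n=1}^∞ (1 − s^{2n})(1 + t·s^{2n−1})(1 + t⁻¹·s^{2n−1}) = Σ_{k∈ℤ} t^k · s^{k²}, where the infinite product converges and the series on the right converges absolutely. -/

import Mathlib

open Finset Filter Complex Topology

namespace JTP

noncomputable def Poch (q : ℂ) (m : ℕ) : ℂ := ∏ j ∈ Finset.range m, (1 - q ^ (j + 1))

lemma one_sub_pow_ne {q : ℂ} (hq : ‖q‖ < 1) (j : ℕ) : 1 - q ^ (j + 1) ≠ 0 := by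
  intro h
  have h1 : q ^ (j + 1) = 1 := by linear_combination -h
  have : ‖q ^ (j + 1)‖ < 1 := by
    rw [norm_pow]
    exact pow_lt_one₀ (norm_nonneg q) hq (Nat.succ_ne_zero j)
  rw [h1, norm_one] at this
  exact lt_irrefl 1 this

lemma poch_ne_zero {q : ℂ} (hq : ‖q‖ < 1) (m : ℕ) : Poch q m ≠ 0 :=
  Finset.prod_ne_zero_iff.mpr fun j _ => one_sub_pow_ne hq j

lemma poch_succ (q : ℂ) (m : ℕ) : Poch q (m + 1) = Poch q m * (1 - q ^ (m + 1)) :=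
  Finset.prod_range_succ _ _

noncomputable def gb (q : ℂ) (M k : ℕ) : ℂ :=
  if k ≤ M then Poch q M / (Poch q k * Poch q (M - k)) else 0

lemma poch_zero (q : ℂ) : Poch q 0 = 1 := Finset.prod_range_zero _

lemma gb_zero {q : ℂ} (hq : ‖q‖ < 1) (M : ℕ) : gb q M 0 = 1 := by
  rw [gb, if_pos (Nat.zero_le M), poch_zero, one_mul, Nat.sub_zero,
    div_self (poch_ne_zero hq M)]

lemma gb_self {q : ℂ} (hq : ‖q‖ < 1) (M : ℕ) : gb q M M = 1 := by
  rw [gb, if_pos le_rfl, Nat.sub_self, poch_zero, mul_one, div_self (poch_ne_zero hq M)]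

lemma gb_of_gt {q : ℂ} {M k : ℕ} (h : M < k) : gb q M k = 0 := by
  simp [gb, Nat.not_le.mpr h]

lemma gb_pascal {q : ℂ} (hq : ‖q‖ < 1) {M k : ℕ} (hk : k ≤ M) :
    gb q (M + 1) (k + 1) = gb q M (k + 1) + q ^ (M - k) * gb q M k := by
  rcases eq_or_lt_of_le hk with rfl | hlt
  · simp [gb_self hq, gb_of_gt (Nat.lt_succ_self k)]
  · obtain ⟨a, rfl⟩ : ∃ a, M = a + k + 1 := ⟨M - (k + 1), by omega⟩
    have e1 : a + k + 1 + 1 - (k + 1) = a + 1 := by omega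
    have e2 : a + k + 1 - k = a + 1 := by omega
    have e3 : a + k + 1 - (k + 1) = a := by omega
    rw [gb, gb, gb, if_pos (by omega), if_pos (by omega), if_pos (by omega), e1, e2, e3,
      show a + k + 1 + 1 = (a + k + 1) + 1 from rfl, poch_succ,
      show Poch q (a + 1) = Poch q a * (1 - q ^ (a + 1)) from poch_succ q a,
      show Poch q (k + 1) = Poch q k * (1 - q ^ (k + 1)) from poch_succ q k,
      show a + k + 1 + 1 = (a + 1) + (k + 1) by omega, pow_add]
    have h1 := poch_ne_zero hq (a + k + 1)
    have h2 := poch_ne_zero hq k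
    have h3 := poch_ne_zero hq a
    have h4 := one_sub_pow_ne hq k
    have h5 := one_sub_pow_ne hq a
    field_simp
    ring

theorem qbinom {q : ℂ} (hq : ‖q‖ < 1) (u : ℂ) (M : ℕ) :
    ∏ i ∈ range M, (1 + u * q ^ i) =
      ∑ k ∈ range (M + 1), gb q M k * q ^ (k.choose 2) * u ^ k := by
  induction M with
  | zero => simp [gb_zero hq]
  | succ M ih =>
    have key : ∀ k ∈ range (M + 1),
        gb q (M + 1) (k + 1) * q ^ ((k + 1).choose 2) * u ^ (k + 1) =
          gb q M (k + 1) * q ^ ((k + 1).choose 2) * u ^ (k + 1) +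
          (gb q M k * q ^ (k.choose 2) * u ^ k) * (u * q ^ M) := by
      intro k hk
      rw [mem_range] at hk
      rw [gb_pascal hq (by omega)]
      have hch : (k + 1).choose 2 = k.choose 2 + k := by
        have h := Nat.choose_succ_succ k 1
        rw [Nat.choose_one_right] at h
        norm_num at h
        omega
      have hpow : q ^ (M - k) * q ^ ((k + 1).choose 2) = q ^ (k.choose 2) * q ^ M := by
        rw [← pow_add, ← pow_add, hch]
        congr 1
        omega
      calc (gb q M (k + 1) + q ^ (M - k) * gb q M k) * q ^ ((k + 1).choose 2) * u ^ (k + 1)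
          = gb q M (k + 1) * q ^ ((k + 1).choose 2) * u ^ (k + 1) +
            gb q M k * (q ^ (M - k) * q ^ ((k + 1).choose 2)) * u ^ (k + 1) := by ring
        _ = _ := by rw [hpow]; ring
    have hA2 : ∑ k ∈ range (M + 2), gb q M k * q ^ (k.choose 2) * u ^ k =
        ∑ k ∈ range (M + 1), gb q M k * q ^ (k.choose 2) * u ^ k := by
      rw [Finset.sum_range_succ, gb_of_gt (Nat.lt_succ_self M), zero_mul, zero_mul, add_zero]
    have hA : ∑ k ∈ range (M + 1), gb q M (k + 1) * q ^ ((k + 1).choose 2) * u ^ (k + 1) +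
        gb q M 0 * q ^ (Nat.choose 0 2) * u ^ 0 =
        ∑ k ∈ range (M + 1), gb q M k * q ^ (k.choose 2) * u ^ k := by
      rw [← hA2]
      exact (Finset.sum_range_succ' (fun k => gb q M k * q ^ (k.choose 2) * u ^ k) (M + 1)).symm
    rw [gb_zero hq] at hA
    rw [prod_range_succ, ih,
      Finset.sum_range_succ' (fun k => gb q (M + 1) k * q ^ (k.choose 2) * u ^ k) (M + 1),
      Finset.sum_congr rfl key, gb_zero hq, Finset.sum_add_distrib, ← Finset.sum_mul]
    simp only [pow_zero, mul_one, one_mul, show Nat.choose 0 2 = 0 from rfl] at hA ⊢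
    rw [← hA]
    ring

lemma sum_odd (N : ℕ) : ∑ n ∈ range N, (2 * n + 1) = N ^ 2 := by
  induction N with
  | zero => simp
  | succ N ih => rw [Finset.sum_range_succ, ih]; ring

lemma two_choose_two (k : ℕ) : 2 * k.choose 2 + k = k ^ 2 := by
  induction k with
  | zero => rfl
  | succ k ih =>
    rw [Nat.choose_succ_succ, Nat.choose_one_right]
    ring_nf
    ring_nf at ih
    omega

section finite
variable {s t : ℂ} (hs : s ≠ 0) (ht : t ≠ 0)

include ht hs in
lemma prod_inv_piece (N : ℕ) :
    ∏ n ∈ range N, (1 + t⁻¹ * s ^ (2 * n + 1)) =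
      (t⁻¹) ^ N * s ^ (N ^ 2) * ∏ n ∈ range N, (1 + t * (s ^ (2 * n + 1))⁻¹) := by
  have h : ∀ n ∈ range N, (1 + t⁻¹ * s ^ (2 * n + 1)) =
      (t⁻¹ * s ^ (2 * n + 1)) * (1 + t * (s ^ (2 * n + 1))⁻¹) := by
    intro n _
    have hsn : s ^ (2 * n + 1) ≠ 0 := pow_ne_zero _ hs
    field_simp
    ring
  rw [Finset.prod_congr rfl h, Finset.prod_mul_distrib, Finset.prod_mul_distrib,
    Finset.prod_const, Finset.prod_pow_eq_pow_sum, sum_odd, Finset.card_range]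

include hs in
lemma prod_merge (N : ℕ) :
    ∏ i ∈ range (2 * N), (1 + (t * (s ^ (2 * N))⁻¹ * s) * (s ^ 2) ^ i) =
      (∏ n ∈ range N, (1 + t * (s ^ (2 * n + 1))⁻¹)) *
        ∏ n ∈ range N, (1 + t * s ^ (2 * n + 1)) := by
  rw [two_mul, Finset.prod_range_add]
  congr 1
  · rw [← Finset.prod_range_reflect]
    refine Finset.prod_congr rfl fun i hi => ?_
    rw [mem_range] at hi
    obtain ⟨m, rfl⟩ : ∃ m, N = m + i + 1 := ⟨N - i - 1, by omega⟩
    congr 1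
    have h1 : (s ^ (2 * (m + i + 1)) : ℂ) ≠ 0 := pow_ne_zero _ hs
    have h2 : (s ^ (2 * (m + i + 1 - 1 - i) + 1) : ℂ) ≠ 0 := pow_ne_zero _ hs
    field_simp
    simp only [show m + i + 1 - 1 - i = m from by omega, ← pow_mul]
    ring
  · refine Finset.prod_congr rfl fun i _ => ?_
    congr 1
    have h1 : (s ^ (2 * N) : ℂ) ≠ 0 := pow_ne_zero _ hs
    field_simp
    simp only [← pow_mul]
    ring

include hs ht in
lemma coeff_eq (N k : ℕ) :
    (t⁻¹) ^ N * s ^ (N ^ 2) * ((s ^ 2) ^ (k.choose 2) * (t * (s ^ (2 * N))⁻¹ * s) ^ k) =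
      t ^ ((k : ℤ) - N) * s ^ (((k : ℤ) - N) ^ 2) := by
  have hc : 2 * Nat.choose k 2 + k = k ^ 2 := two_choose_two k
  rw [show ((k : ℤ) - N) ^ 2 = ((k ^ 2 + N ^ 2 : ℕ) : ℤ) - ((2 * k * N : ℕ) : ℤ) by push_cast; ring,
    zpow_sub₀ hs, zpow_sub₀ ht, zpow_natCast, zpow_natCast, zpow_natCast, zpow_natCast]
  rw [mul_pow, mul_pow, inv_pow, inv_pow, ← pow_mul, ← pow_mul]
  field_simp
  ring_nf
  simp only [← pow_add]
  rw [show N * k * 2 + N ^ 2 + k.choose 2 * 2 + k = N * k * 2 + N ^ 2 + k ^ 2 from by omega]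

include hs ht in
lemma finite_jtp (hs1 : ‖s‖ < 1) (N : ℕ) :
    ∏ n ∈ range N,
        ((1 - s ^ (2 * n + 2)) * (1 + t * s ^ (2 * n + 1)) * (1 + t⁻¹ * s ^ (2 * n + 1))) =
      ∑ k ∈ range (2 * N + 1),
        Poch (s ^ 2) N * gb (s ^ 2) (2 * N) k * t ^ ((k : ℤ) - N) * s ^ (((k : ℤ) - N) ^ 2) := by
  have hq : ‖(s ^ 2 : ℂ)‖ < 1 := by
    rw [norm_pow]; exact pow_lt_one₀ (norm_nonneg s) hs1 two_ne_zero
  have hP : ∏ n ∈ range N, (1 - s ^ (2 * n + 2)) = Poch (s ^ 2) N := by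
    rw [Poch]
    refine Finset.prod_congr rfl fun n _ => ?_
    ring
  calc ∏ n ∈ range N,
        ((1 - s ^ (2 * n + 2)) * (1 + t * s ^ (2 * n + 1)) * (1 + t⁻¹ * s ^ (2 * n + 1)))
      = (∏ n ∈ range N, (1 - s ^ (2 * n + 2))) * (∏ n ∈ range N, (1 + t * s ^ (2 * n + 1))) *
          ∏ n ∈ range N, (1 + t⁻¹ * s ^ (2 * n + 1)) := by
        rw [Finset.prod_mul_distrib, Finset.prod_mul_distrib]
    _ = Poch (s ^ 2) N * ((t⁻¹) ^ N * s ^ (N ^ 2) *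
          ((∏ n ∈ range N, (1 + t * (s ^ (2 * n + 1))⁻¹)) *
            ∏ n ∈ range N, (1 + t * s ^ (2 * n + 1)))) := by
        rw [hP, prod_inv_piece hs ht]; ring
    _ = Poch (s ^ 2) N * ((t⁻¹) ^ N * s ^ (N ^ 2) *
          ∏ i ∈ range (2 * N), (1 + (t * (s ^ (2 * N))⁻¹ * s) * (s ^ 2) ^ i)) := by
        rw [prod_merge hs]
    _ = Poch (s ^ 2) N * ((t⁻¹) ^ N * s ^ (N ^ 2) *
          ∑ k ∈ range (2 * N + 1),
            gb (s ^ 2) (2 * N) k * (s ^ 2) ^ (k.choose 2) * (t * (s ^ (2 * N))⁻¹ * s) ^ k) := by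
        rw [qbinom hq]
    _ = ∑ k ∈ range (2 * N + 1),
          Poch (s ^ 2) N * gb (s ^ 2) (2 * N) k *
            ((t⁻¹) ^ N * s ^ (N ^ 2) *
              ((s ^ 2) ^ (k.choose 2) * (t * (s ^ (2 * N))⁻¹ * s) ^ k)) := by
        rw [Finset.mul_sum, Finset.mul_sum]
        exact Finset.sum_congr rfl fun k _ => by ring
    _ = _ := by
        refine Finset.sum_congr rfl fun k _ => ?_
        rw [coeff_eq hs ht]
        ring

end finite

lemma exists_pos_lb {f : ℕ → ℂ} {L : ℂ} (hL : L ≠ 0) (hf : ∀ n, f n ≠ 0)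
    (h : Tendsto f atTop (𝓝 L)) : ∃ c > 0, ∀ n, c ≤ ‖f n‖ := by
  have hn : Tendsto (fun n => ‖f n‖) atTop (𝓝 ‖L‖) := h.norm
  have hLpos : 0 < ‖L‖ := norm_pos_iff.mpr hL
  have hev : ∀ᶠ n in atTop, ‖L‖ / 2 ≤ ‖f n‖ :=
    hn.eventually (eventually_ge_nhds (by linarith :  ‖L‖ / 2 < ‖L‖))
  obtain ⟨N₀, hN₀⟩ := eventually_atTop.mp hev
  set c : ℝ := min (‖L‖ / 2) ((Finset.range (N₀ + 1)).inf' ⟨0, by simp⟩ fun n => ‖f n‖) with hc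
  refine ⟨c, ?_, fun n => ?_⟩
  · apply lt_min (by linarith)
    refine (Finset.lt_inf'_iff _).mpr ?_
    exact fun n _ => norm_pos_iff.mpr (hf n)
  · rcases le_or_gt n N₀ with hn' | hn'
    · exact le_trans (min_le_right _ _)
        (Finset.inf'_le _ (Finset.mem_range.mpr (by omega)))
    · exact le_trans (min_le_left _ _) (hN₀ n hn'.le)

lemma mult_of_summable {f : ℕ → ℂ} (hne : ∀ n, f n ≠ 0) (hs : Summable fun n => f n - 1) :
    Multipliable f ∧ (∏' n, f n) ≠ 0 ∧
      Tendsto (fun N => ∏ n ∈ range N, f n) atTop (𝓝 (∏' n, f n)) := by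
  have hlog : Summable fun n => Complex.log (f n) := by
    have h0 : Tendsto (fun n => f n - 1) atTop (𝓝 0) := hs.tendsto_atTop_zero
    have hev : ∀ᶠ n in atTop, ‖f n - 1‖ ≤ 1 / 2 :=
      (tendsto_norm_zero.comp h0).eventually (eventually_le_nhds (by norm_num))
    refine Summable.of_norm_bounded_eventually (g := fun n => 3 / 2 * ‖f n - 1‖)
      ((summable_norm_iff.mpr hs).mul_left _) ?_
    rw [Nat.cofinite_eq_atTop]
    filter_upwards [hev] with n hn
    have := Complex.norm_log_one_add_half_le_self (z := f n - 1) hn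
    simpa using this
  have hm : Multipliable f :=
    Complex.multipliable_of_summable_log hlog
  have htp : (∏' n, f n) ≠ 0 := by
    have := Complex.cexp_tsum_eq_tprod (fun n => hne n) hlog
    rw [← this]
    exact Complex.exp_ne_zero _
  exact ⟨hm, htp, hm.hasProd.tendsto_prod_nat⟩

section pochlim
variable {q : ℂ} (hq : ‖q‖ < 1)

include hq in
lemma poch_facts :
    (∏' j : ℕ, (1 - q ^ (j + 1))) ≠ 0 ∧
      Tendsto (fun M => Poch q M) atTop (𝓝 (∏' j : ℕ, (1 - q ^ (j + 1)))) := by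
  have hs : Summable fun n : ℕ => (1 - q ^ (n + 1)) - 1 := by
    have : Summable fun n : ℕ => q ^ n := summable_geometric_of_norm_lt_one hq
    refine ((this.mul_left (-q)).congr fun n => ?_)
    rw [pow_succ]
    ring
  obtain ⟨_, h2, h3⟩ := mult_of_summable (fun n => one_sub_pow_ne hq n) hs
  exact ⟨h2, h3⟩

include hq in
lemma poch_ub (M : ℕ) : ‖Poch q M‖ ≤ Real.exp ((1 - ‖q‖)⁻¹) := by
  have hx0 : (0:ℝ) ≤ ‖q‖ := norm_nonneg q
  calc ‖Poch q M‖ = ∏ j ∈ range M, ‖1 - q ^ (j + 1)‖ := by rw [Poch, norm_prod]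
    _ ≤ ∏ j ∈ range M, Real.exp (‖q‖ ^ (j + 1)) := by
        refine Finset.prod_le_prod (fun j _ => norm_nonneg _) fun j _ => ?_
        calc ‖1 - q ^ (j + 1)‖ ≤ ‖(1:ℂ)‖ + ‖q ^ (j + 1)‖ := norm_sub_le _ _
          _ = ‖q‖ ^ (j + 1) + 1 := by rw [norm_one, norm_pow]; ring
          _ ≤ Real.exp (‖q‖ ^ (j + 1)) := Real.add_one_le_exp _
    _ = Real.exp (∑ j ∈ range M, ‖q‖ ^ (j + 1)) := by rw [Real.exp_sum]
    _ ≤ Real.exp ((1 - ‖q‖)⁻¹) := by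
        apply Real.exp_le_exp.mpr
        calc ∑ j ∈ range M, ‖q‖ ^ (j + 1) ≤ ∑ j ∈ range M, ‖q‖ ^ j :=
              Finset.sum_le_sum fun j _ =>
                pow_le_pow_of_le_one hx0 hq.le (Nat.le_succ j)
          _ ≤ ∑' j : ℕ, ‖q‖ ^ j :=
              (summable_geometric_of_lt_one hx0 hq).sum_le_tsum _ (fun j _ => by positivity)
          _ = (1 - ‖q‖)⁻¹ := tsum_geometric_of_lt_one hx0 hq

include hq in
lemma poch_lb : ∃ c > 0, ∀ M, c ≤ ‖Poch q M‖ :=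
  exists_pos_lb (poch_facts hq).1 (poch_ne_zero hq) (poch_facts hq).2

end pochlim

lemma nat_summable {s : ℂ} (hs1 : ‖s‖ < 1) (w : ℂ) :
    Summable (fun n : ℕ => ‖w ^ n * s ^ (n ^ 2)‖) := by
  have htend : Tendsto (fun n : ℕ => ‖w‖ * ‖s‖ ^ (2 * n + 1)) atTop (𝓝 0) := by
    have h1 : Tendsto (fun n : ℕ => ‖s‖ ^ n) atTop (𝓝 0) :=
      tendsto_pow_atTop_nhds_zero_of_lt_one (norm_nonneg s) hs1
    have h2 : Tendsto (fun n : ℕ => 2 * n + 1) atTop atTop :=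
      tendsto_atTop_mono (fun n => by simp; omega) tendsto_id
    simpa using (h1.comp h2).const_mul ‖w‖
  have hev : ∀ᶠ n : ℕ in atTop, ‖w‖ * ‖s‖ ^ (2 * n + 1) ≤ 1 / 2 :=
    htend.eventually (eventually_le_nhds (by norm_num))
  refine summable_of_ratio_norm_eventually_le (r := 1 / 2) (by norm_num) ?_
  filter_upwards [hev] with n hn
  have he : w ^ (n + 1) * s ^ ((n + 1) ^ 2) =
      (w ^ n * s ^ (n ^ 2)) * (w * s ^ (2 * n + 1)) := by
    rw [show (n + 1) ^ 2 = n ^ 2 + (2 * n + 1) by ring, pow_add, pow_succ]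
    ring
  rw [Real.norm_of_nonneg (norm_nonneg _), Real.norm_of_nonneg (norm_nonneg _), he]
  simp only [norm_mul, norm_pow]
  have h0 : (0:ℝ) ≤ ‖w‖ ^ n * ‖s‖ ^ (n ^ 2) := by positivity
  nlinarith [h0, hn, norm_nonneg w, norm_nonneg s]

lemma int_summable {s t : ℂ} (hs1 : ‖s‖ < 1) :
    Summable (fun k : ℤ => ‖t ^ k * s ^ (k ^ 2)‖) := by
  refine Summable.of_nat_of_neg ?_ ?_
  · refine (nat_summable hs1 t).congr fun n => ?_
    have h : (t : ℂ) ^ ((n : ℤ)) * s ^ (((n : ℤ)) ^ 2) = t ^ n * s ^ (n ^ 2) := by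
      rw [zpow_natCast, show ((n:ℤ))^2 = ((n^2 : ℕ) : ℤ) by push_cast; ring, zpow_natCast]
    rw [h]
  · refine (nat_summable hs1 t⁻¹).congr fun n => ?_
    have h : (t : ℂ) ^ (-(n : ℤ)) * s ^ ((-(n : ℤ)) ^ 2) = t⁻¹ ^ n * s ^ (n ^ 2) := by
      rw [zpow_neg, zpow_natCast, ← inv_pow,
        show (-(n:ℤ))^2 = ((n^2 : ℕ) : ℤ) by push_cast; ring, zpow_natCast]
    rw [h]

section main
variable (s t : ℂ)

noncomputable def F (N : ℕ) (m : ℤ) : ℂ :=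
  if m.natAbs ≤ N then
    Poch (s ^ 2) N * gb (s ^ 2) (2 * N) (m + N).toNat * t ^ m * s ^ (m ^ 2)
  else 0

lemma tsum_F (N : ℕ) :
    ∑' m : ℤ, F s t N m =
      ∑ k ∈ range (2 * N + 1),
        Poch (s ^ 2) N * gb (s ^ 2) (2 * N) k * t ^ ((k : ℤ) - N) * s ^ (((k : ℤ) - N) ^ 2) := by
  have hinj : Set.InjOn (fun k : ℕ => (k : ℤ) - N) (range (2 * N + 1)) := by
    intro a _ b _ h
    simpa using h
  rw [tsum_eq_sum (s := (range (2 * N + 1)).image (fun k : ℕ => (k : ℤ) - N))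
    (fun m hm => ?_), Finset.sum_image hinj]
  · refine Finset.sum_congr rfl fun k hk => ?_
    rw [mem_range] at hk
    rw [F, if_pos (by omega), show ((k : ℤ) - N + N).toNat = k by omega]
  · rw [F, if_neg]
    intro habs
    exact hm (Finset.mem_image.mpr ⟨(m + N).toNat, Finset.mem_range.mpr (by omega),
      by omega⟩)

variable {s t : ℂ}

lemma F_tendsto (hs1 : ‖s‖ < 1) (m : ℤ) :
    Tendsto (fun N => F s t N m) atTop (𝓝 (t ^ m * s ^ (m ^ 2))) := by
  have hq : ‖(s ^ 2 : ℂ)‖ < 1 := by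
    rw [norm_pow]; exact pow_lt_one₀ (norm_nonneg s) hs1 two_ne_zero
  obtain ⟨hPne, hPlim⟩ := poch_facts hq
  set P := ∏' j : ℕ, (1 - (s ^ 2) ^ (j + 1)) with hP
  have h2N : Tendsto (fun N : ℕ => 2 * N) atTop atTop :=
    tendsto_atTop_mono (fun n => by simp; omega) (tendsto_id (α := ℕ) (x := atTop))
  have hmN : Tendsto (fun N : ℕ => (m + N).toNat) atTop atTop :=
    tendsto_atTop.mpr fun b => eventually_atTop.mpr ⟨b + m.natAbs, fun n hn => by omega⟩
  have hNm : Tendsto (fun N : ℕ => ((N : ℤ) - m).toNat) atTop atTop :=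
    tendsto_atTop.mpr fun b => eventually_atTop.mpr ⟨b + m.natAbs, fun n hn => by omega⟩
  have hG : Tendsto (fun N : ℕ => Poch (s ^ 2) N * Poch (s ^ 2) (2 * N) /
      (Poch (s ^ 2) ((m + N).toNat) * Poch (s ^ 2) (((N : ℤ) - m).toNat)))
      atTop (𝓝 1) := by
    have hmain := (hPlim.mul (hPlim.comp h2N)).div
      ((hPlim.comp hmN).mul (hPlim.comp hNm)) (mul_ne_zero hPne hPne)
    rw [div_self (mul_ne_zero hPne hPne)] at hmain
    exact hmain
  have hlim := hG.mul_const (t ^ m * s ^ (m ^ 2))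
  rw [one_mul] at hlim
  refine hlim.congr' ?_
  filter_upwards [eventually_ge_atTop m.natAbs] with N hN
  rw [F, if_pos hN, gb, if_pos (by omega),
    show 2 * N - (m + N).toNat = ((N : ℤ) - m).toNat by omega]
  ring

lemma F_bound (hs1 : ‖s‖ < 1) :
    ∃ C : ℝ, ∀ N : ℕ, ∀ m : ℤ, ‖F s t N m‖ ≤ C * ‖t ^ m * s ^ (m ^ 2)‖ := by
  have hq : ‖(s ^ 2 : ℂ)‖ < 1 := by
    rw [norm_pow]; exact pow_lt_one₀ (norm_nonneg s) hs1 two_ne_zero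
  obtain ⟨c0, hc0, hlb⟩ := poch_lb hq
  set C1 := Real.exp ((1 - ‖(s ^ 2 : ℂ)‖)⁻¹) with hC1
  refine ⟨C1 * C1 / (c0 * c0), fun N m => ?_⟩
  by_cases h : m.natAbs ≤ N
  · rw [F, if_pos h, gb, if_pos (by omega)]
    have key : ‖Poch (s ^ 2) N‖ * (‖Poch (s ^ 2) (2 * N)‖ /
        (‖Poch (s ^ 2) ((m + N).toNat)‖ * ‖Poch (s ^ 2) (2 * N - (m + N).toNat)‖)) ≤
        C1 * C1 / (c0 * c0) := by
      rw [mul_div_assoc']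
      refine div_le_div₀ (by positivity)
        (mul_le_mul (poch_ub hq N) (poch_ub hq (2 * N)) (norm_nonneg _)
          (Real.exp_pos _).le)
        (by positivity)
        (mul_le_mul (hlb _) (hlb _) hc0.le (norm_nonneg _))
    calc ‖Poch (s ^ 2) N * (Poch (s ^ 2) (2 * N) /
          (Poch (s ^ 2) ((m + N).toNat) * Poch (s ^ 2) (2 * N - (m + N).toNat))) *
          t ^ m * s ^ (m ^ 2)‖
        = ‖Poch (s ^ 2) N‖ * (‖Poch (s ^ 2) (2 * N)‖ /
            (‖Poch (s ^ 2) ((m + N).toNat)‖ * ‖Poch (s ^ 2) (2 * N - (m + N).toNat)‖)) *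
            ‖t ^ m * s ^ (m ^ 2)‖ := by
          simp only [norm_mul, norm_div]
          ring
      _ ≤ C1 * C1 / (c0 * c0) * ‖t ^ m * s ^ (m ^ 2)‖ :=
          mul_le_mul_of_nonneg_right key (norm_nonneg _)
  · rw [F, if_neg h, norm_zero]
    positivity

end main

end JTP

open JTP

/-- **Jacobi triple product identity.** For `0 < |s| < 1` and `t ≠ 0`,
`∏_{n≥1} (1 - s^{2n})(1 + t s^{2n-1})(1 + t⁻¹ s^{2n-1}) = ∑_{k∈ℤ} t^k s^{k²}`,
the infinite product being convergent and the series absolutely convergent. -/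
theorem jacobi_triple_product (s t : ℂ) (hs0 : 0 < ‖s‖) (hs1 : ‖s‖ < 1) (ht : t ≠ 0) :
    Multipliable (fun n : ℕ =>
      (1 - s ^ (2 * n + 2)) * (1 + t * s ^ (2 * n + 1)) * (1 + t⁻¹ * s ^ (2 * n + 1))) ∧
    Summable (fun k : ℤ => ‖t ^ k * s ^ (k ^ 2)‖) ∧
    (∏' n : ℕ,
      (1 - s ^ (2 * n + 2)) * (1 + t * s ^ (2 * n + 1)) * (1 + t⁻¹ * s ^ (2 * n + 1))) =
      ∑' k : ℤ, t ^ k * s ^ (k ^ 2) := by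
  have hs : s ≠ 0 := by rwa [← norm_pos_iff]
  set f : ℕ → ℂ := fun n =>
    (1 - s ^ (2 * n + 2)) * (1 + t * s ^ (2 * n + 1)) * (1 + t⁻¹ * s ^ (2 * n + 1)) with hf
  have hsum : Summable (fun k : ℤ => ‖t ^ k * s ^ (k ^ 2)‖) := int_summable hs1
  obtain ⟨C, hC⟩ := F_bound (s := s) (t := t) hs1
  have hDC : Tendsto (fun N => ∑' m : ℤ, F s t N m) atTop
      (𝓝 (∑' k : ℤ, t ^ k * s ^ (k ^ 2))) :=
    tendsto_tsum_of_dominated_convergence (hsum.mul_left C) (F_tendsto hs1)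
      (Eventually.of_forall fun N k => hC N k)
  have hPP : Tendsto (fun N => ∏ n ∈ range N, f n) atTop
      (𝓝 (∑' k : ℤ, t ^ k * s ^ (k ^ 2))) := by
    refine hDC.congr fun N => ?_
    rw [tsum_F, ← finite_jtp hs ht hs1]
  by_cases hne : ∀ n, f n ≠ 0
  · have hfs : Summable (fun n => f n - 1) := by
      have hgeom : ∀ k : ℕ, k ≠ 0 → ‖(s ^ k : ℂ)‖ < 1 := fun k hk => by
        rw [norm_pow]; exact pow_lt_one₀ (norm_nonneg s) hs1 hk
      have g1 := (summable_geometric_of_norm_lt_one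
        (hgeom 2 two_ne_zero)).mul_left (t * s + t⁻¹ * s - s ^ 2)
      have g2 := (summable_geometric_of_norm_lt_one
        (hgeom 4 (by norm_num))).mul_left (t * t⁻¹ * s ^ 2 - t * s ^ 3 - t⁻¹ * s ^ 3)
      have g3 := (summable_geometric_of_norm_lt_one
        (hgeom 6 (by norm_num))).mul_left (-(t * t⁻¹ * s ^ 4))
      refine ((g1.add g2).add g3).congr fun n => ?_
      rw [hf]
      ring
    obtain ⟨hm, _, htend⟩ := mult_of_summable hne hfs
    exact ⟨hm, hsum, tendsto_nhds_unique htend hPP⟩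
  · push_neg at hne
    obtain ⟨n₀, hn₀⟩ := hne
    have hp0 : HasProd f 0 := by
      have hev : ∀ᶠ A : Finset ℕ in atTop, ∏ i ∈ A, f i = 0 := by
        filter_upwards [eventually_ge_atTop ({n₀} : Finset ℕ)] with A hA
        exact Finset.prod_eq_zero (hA (Finset.mem_singleton_self n₀)) hn₀
      exact Tendsto.congr' (hev.mono fun A hA => hA.symm) tendsto_const_nhds
    have hzero : Tendsto (fun N => ∏ n ∈ range N, f n) atTop (𝓝 0) := by
      have hev2 : ∀ᶠ N : ℕ in atTop, ∏ n ∈ range N, f n = 0 := by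
        filter_upwards [eventually_ge_atTop (n₀ + 1)] with N hN
        exact Finset.prod_eq_zero (mem_range.mpr (by omega)) hn₀
      exact Tendsto.congr' (hev2.mono fun N hN => hN.symm) tendsto_const_nhds
    refine ⟨⟨0, hp0⟩, hsum, ?_⟩
    rw [hp0.tprod_eq, tendsto_nhds_unique hzero hPP]
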